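/- Let R be a commutative ring, n ∈ ℕ, and let f_1, …, f_n : ℕ → R be arbitrary functions. Then Σ_{w ∈ S_n} ∏_{t=1}^{n} f_t(|J_w^{<t}|) = ∏_{t=1}^{n} ( Σ_{k=0}^{t−1} f_t(k) ). (This is the product–sum interchange, equation (3.10) of the paper, which follows from the bijectivity of the inversion-table map θ_n.) -/

import Mathlib

open Finset Equiv

private def code {n : ℕ} (w : Equiv.Perm (Fin n)) (t : Fin n) : ℕ :=
  (Finset.univ.filter (fun j => j < t ∧ w j < w t)).card

private lemma card_filter_lt {n : ℕ} (w : Equiv.Perm (Fin n)) (c : Fin n) :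
    (Finset.univ.filter (fun j => w j < c)).card = (c : ℕ) := by
  rw [← Fin.card_Iio (b := c)]
  apply Finset.card_bij (fun j _ => w j)
  · intro j hj
    simp only [mem_filter, mem_univ, true_and] at hj
    simpa using hj
  · intro j₁ _ j₂ _ h
    exact w.injective h
  · intro v hv
    refine ⟨w.symm v, ?_, by simp⟩
    simp only [mem_filter, mem_univ, true_and, Equiv.apply_symm_apply]
    simpa using hv

private lemma code_key {n : ℕ} (w : Equiv.Perm (Fin n)) (t : Fin n) :
    code w t + (Finset.univ.filter (fun j => t < j ∧ w j < w t)).card = (w t : ℕ) := by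
  rw [code, ← card_filter_lt w (w t)]
  rw [← Finset.card_union_of_disjoint]
  · congr 1
    ext j
    simp only [mem_union, mem_filter, mem_univ, true_and]
    constructor
    · rintro (⟨_, h⟩ | ⟨_, h⟩) <;> exact h
    · intro h
      rcases lt_trichotomy j t with hj | hj | hj
      · exact Or.inl ⟨hj, h⟩
      · exact absurd h (by rw [hj]; exact lt_irrefl _)
      · exact Or.inr ⟨hj, h⟩
  · rw [Finset.disjoint_left]
    intro j h1 h2
    simp only [mem_filter, mem_univ, true_and] at h1 h2
    exact absurd h2.1 (lt_asymm h1.1)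

private lemma step_lt {n : ℕ} (w w' : Equiv.Perm (Fin n)) (t : Fin n)
    (hc : code w t = code w' t) (hs : ∀ s, t < s → w s = w' s)
    (hlt : w t < w' t) : False := by
  have h1 := code_key w t
  have h2 := code_key w' t
  rw [show (Finset.univ.filter (fun j => t < j ∧ w' j < w' t))
      = (Finset.univ.filter (fun j => t < j ∧ w j < w' t)) from
    Finset.filter_congr (fun j _ => by
      constructor
      · rintro ⟨hj, h⟩; exact ⟨hj, by rwa [hs j hj]⟩
      · rintro ⟨hj, h⟩; exact ⟨hj, by rwa [← hs j hj]⟩)] at h2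
  set A := (Finset.univ.filter (fun j => t < j ∧ w j < w t)).card with hA
  set B := (Finset.univ.filter (fun j => t < j ∧ w j < w' t)).card with hB
  set C := (Finset.univ.filter (fun j => t < j ∧ w t ≤ w j ∧ w j < w' t)).card with hC
  have hBle : B ≤ A + C := by
    have hsub : (Finset.univ.filter (fun j => t < j ∧ w j < w' t))
        ⊆ (Finset.univ.filter (fun j => t < j ∧ w j < w t))
          ∪ (Finset.univ.filter (fun j => t < j ∧ w t ≤ w j ∧ w j < w' t)) := by
      intro j hj
      simp only [mem_filter, mem_union, mem_univ, true_and] at hj ⊢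
      rcases lt_or_ge (w j) (w t) with h | h
      · exact Or.inl ⟨hj.1, h⟩
      · exact Or.inr ⟨hj.1, h, hj.2⟩
    exact le_trans (Finset.card_le_card hsub) (Finset.card_union_le _ _)
  have hCle : C ≤ (w' t : ℕ) - (w t : ℕ) - 1 := by
    rw [hC, ← Fin.card_Ioo (a := w t) (b := w' t)]
    apply Finset.card_le_card_of_injOn (fun j => w j)
    · intro j hj
      simp only [Finset.mem_coe, mem_filter, mem_univ, true_and] at hj
      rw [Finset.mem_coe, Finset.mem_Ioo]
      refine ⟨lt_of_le_of_ne hj.2.1 ?_, hj.2.2⟩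
      intro h
      exact absurd (w.injective h.symm) (ne_of_gt hj.1)
    · intro j₁ _ j₂ _ h
      exact w.injective h
  have hltn : (w t : ℕ) < (w' t : ℕ) := hlt
  omega

private lemma code_injective {n : ℕ} (w w' : Equiv.Perm (Fin n))
    (h : ∀ t, code w t = code w' t) : w = w' := by
  have key : ∀ m : ℕ, ∀ t : Fin n, n ≤ (t : ℕ) + m → w t = w' t := by
    intro m
    induction m with
    | zero => intro t ht; exact absurd ht (by omega)
    | succ m ih =>
      intro t _
      have hs : ∀ s, t < s → w s = w' s := by
        intro s hsl
        have : (t : ℕ) < (s : ℕ) := hsl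
        exact ih s (by omega)
      rcases lt_trichotomy (w t) (w' t) with h1 | h1 | h1
      · exact absurd (step_lt w w' t (h t) hs h1) id
      · exact h1
      · exact absurd (step_lt w' w t (h t).symm (fun s hs' => (hs s hs').symm) h1) id
  exact Equiv.ext (fun t => key n t (by omega))

private lemma code_lt {n : ℕ} (w : Equiv.Perm (Fin n)) (t : Fin n) :
    code w t < (t : ℕ) + 1 := by
  have h1 : code w t ≤ (Finset.univ.filter (fun j : Fin n => j < t)).card := by
    apply Finset.card_le_card
    intro j hj
    simp only [mem_filter, mem_univ, true_and] at hj ⊢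
    exact hj.1
  have h2 : (Finset.univ.filter (fun j : Fin n => j < t)).card = (t : ℕ) := by
    have := card_filter_lt (n := n) 1 t
    exact this
  omega

private def enc {n : ℕ} (w : Equiv.Perm (Fin n)) : ∀ t : Fin n, Fin ((t : ℕ) + 1) :=
  fun t => ⟨code w t, code_lt w t⟩

private lemma enc_bijective (n : ℕ) : Function.Bijective (enc (n := n)) := by
  rw [Fintype.bijective_iff_injective_and_card]
  constructor
  · intro w w' h
    apply code_injective
    intro t
    have := congrFun h t
    exact congrArg Fin.val this
  · rw [Fintype.card_perm, Fintype.card_pi, Fintype.card_fin]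
    simp only [Fintype.card_fin]
    rw [Fin.prod_univ_eq_prod_range (fun i => i + 1) n,
      Finset.prod_range_add_one_eq_factorial]

theorem stmt7 {R : Type*} [CommRing R] (n : ℕ) (f : Fin n → ℕ → R) :
    ∑ w : Equiv.Perm (Fin n), ∏ t : Fin n,
        f t ((Finset.univ.filter (fun j => j < t ∧ w j < w t)).card)
      = ∏ t : Fin n, ∑ k ∈ Finset.range ((t : ℕ) + 1), f t k := by
  have h1 : ∑ w : Equiv.Perm (Fin n), ∏ t : Fin n,
        f t ((Finset.univ.filter (fun j => j < t ∧ w j < w t)).card)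
      = ∑ g : ∀ t : Fin n, Fin ((t : ℕ) + 1), ∏ t : Fin n, f t (g t) :=
    Fintype.sum_bijective enc (enc_bijective n) _ _ (fun w => rfl)
  rw [h1, ← Fintype.prod_sum (fun (t : Fin n) (k : Fin ((t : ℕ) + 1)) => f t (k : ℕ))]
  exact Finset.prod_congr rfl (fun t _ => Fin.sum_univ_eq_sum_range (f t) ((t : ℕ) + 1))
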